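/- In quantum theory on a finite-dimensional Hilbert space, an effect a (operator with 0 ≤ a ≤ 1) is sharp — meaning the only positive operator c with c ≤ a and c ≤ 1 − a is c = 0 — if and only if a is a projection (a² = a). -/

import Mathlib

open scoped ComplexOrder
open Matrix

section SqrtPort
open scoped MatrixOrder

noncomputable def Matrix.PosSemidef.sqrt {n : ℕ} {A : Matrix (Fin n) (Fin n) ℂ}
    (_hA : A.PosSemidef) : Matrix (Fin n) (Fin n) ℂ := CFC.sqrt A

lemma Matrix.PosSemidef.posSemidef_sqrt {n : ℕ} {A : Matrix (Fin n) (Fin n) ℂ}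
    (hA : A.PosSemidef) : hA.sqrt.PosSemidef :=
  (CFC.sqrt_nonneg A).posSemidef

lemma Matrix.PosSemidef.sqrt_mul_self {n : ℕ} {A : Matrix (Fin n) (Fin n) ℂ}
    (hA : A.PosSemidef) : hA.sqrt * hA.sqrt = A :=
  CFC.sqrt_mul_sqrt_self A hA.nonneg

end SqrtPort

lemma psd_neg_eq_zero {n : ℕ} {X : Matrix (Fin n) (Fin n) ℂ}
    (hX : X.PosSemidef) (hX' : (-X).PosSemidef) : X = 0 := by
  have h : ∀ x : Fin n → ℂ, X *ᵥ x = 0 := by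
    intro x
    rw [← hX.dotProduct_mulVec_zero_iff]
    have h1 := hX.dotProduct_mulVec_nonneg x
    have h2 := hX'.dotProduct_mulVec_nonneg x
    rw [Matrix.neg_mulVec, dotProduct_neg, le_neg, neg_zero] at h2
    exact le_antisymm h2 h1
  ext i j
  have := h (Pi.single j 1)
  simpa [Matrix.mulVec_single] using congrFun this i

lemma psd_conj_zero {n : ℕ} {c p : Matrix (Fin n) (Fin n) ℂ}
    (hc : c.PosSemidef) (hp : p.IsHermitian) (h : p * c * p = 0) : p * c = 0 := by
  have hs : (p * hc.sqrt) * (p * hc.sqrt)ᴴ = 0 := by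
    calc (p * hc.sqrt) * (p * hc.sqrt)ᴴ
        = (p * hc.sqrt) * (hc.sqrt * p) := by
          rw [Matrix.conjTranspose_mul, hc.posSemidef_sqrt.isHermitian.eq, hp.eq]
      _ = p * (hc.sqrt * hc.sqrt) * p := by noncomm_ring
      _ = 0 := by rw [hc.sqrt_mul_self, h]
  have h0 : p * hc.sqrt = 0 := by
    have := Matrix.conjTranspose_mul_self_eq_zero (A := (p * hc.sqrt)ᴴ)
    rw [Matrix.conjTranspose_conjTranspose] at this
    rw [← Matrix.conjTranspose_eq_zero, ← this, hs]
  calc p * c = p * hc.sqrt * hc.sqrt := by rw [Matrix.mul_assoc, hc.sqrt_mul_self]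
  _ = 0 := by rw [h0, Matrix.zero_mul]

/-- an effect `a` (`0 ≤ a ≤ 1`) on a finite-dimensional complex Hilbert space is
sharp (the only positive operator `c` with `c ≤ a` and `c ≤ 1 - a` is `0`) iff `a` is a
projection (`a² = a`). -/
theorem sharp_effect_iff_projection {n : ℕ} (a : Matrix (Fin n) (Fin n) ℂ)
    (ha : a.PosSemidef) (ha1 : (1 - a).PosSemidef) :
    (∀ c : Matrix (Fin n) (Fin n) ℂ, c.PosSemidef → (a - c).PosSemidef →
        ((1 - a) - c).PosSemidef → c = 0) ↔ a * a = a := by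
  constructor
  · intro h
    obtain ⟨s, hs, hss⟩ : ∃ s : Matrix (Fin n) (Fin n) ℂ, sᴴ = s ∧ s * s = a :=
      ⟨ha.sqrt, ha.posSemidef_sqrt.isHermitian.eq, ha.sqrt_mul_self⟩
    have key : a - a * a = s * (1 - a) * sᴴ := by
      rw [hs, ← hss]; noncomm_ring
    have hpsd : (a - a * a).PosSemidef := by
      rw [key]; exact ha1.mul_mul_conjTranspose_same s
    have h1 : (a - (a - a * a)).PosSemidef := by
      have e : a - (a - a * a) = aᴴ * a := by rw [ha.isHermitian.eq]; noncomm_ring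
      rw [e]; exact Matrix.posSemidef_conjTranspose_mul_self a
    have h2 : ((1 - a) - (a - a * a)).PosSemidef := by
      have e : (1 - a) - (a - a * a) = (1 - a)ᴴ * (1 - a) := by
        rw [ha1.isHermitian.eq]; noncomm_ring
      rw [e]; exact Matrix.posSemidef_conjTranspose_mul_self (1 - a)
    have h0 := h (a - a * a) hpsd h1 h2
    rw [sub_eq_zero] at h0
    exact h0.symm
  · intro hproj c hc hac h1ac
    have e1 : (1 - a) * a * (1 - a) = 0 := by
      calc (1 - a) * a * (1 - a) = (a - a * a) * (1 - a) := by noncomm_ring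
        _ = 0 := by rw [hproj, sub_self, Matrix.zero_mul]
    have p1 : ((1 - a) * (a - c) * (1 - a)).PosSemidef := by
      have := hac.mul_mul_conjTranspose_same (1 - a)
      rwa [ha1.isHermitian.eq] at this
    have eq1 : (1 - a) * (a - c) * (1 - a) = -((1 - a) * c * (1 - a)) := by
      have e : (1 - a) * (a - c) * (1 - a)
          = (1 - a) * a * (1 - a) - (1 - a) * c * (1 - a) := by noncomm_ring
      rw [e, e1, zero_sub]
    have pc : ((1 - a) * c * (1 - a)).PosSemidef := by
      have := hc.mul_mul_conjTranspose_same (1 - a)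
      rwa [ha1.isHermitian.eq] at this
    have z1 : (1 - a) * c * (1 - a) = 0 := psd_neg_eq_zero pc (eq1 ▸ p1)
    have hc1 : (1 - a) * c = 0 := psd_conj_zero hc ha1.isHermitian z1
    have e2 : a * (1 - a) * a = 0 := by
      calc a * (1 - a) * a = (a - a * a) * a := by noncomm_ring
        _ = 0 := by rw [hproj, sub_self, Matrix.zero_mul]
    have p2 : (a * ((1 - a) - c) * a).PosSemidef := by
      have := h1ac.mul_mul_conjTranspose_same a
      rwa [ha.isHermitian.eq] at this
    have eq2 : a * ((1 - a) - c) * a = -(a * c * a) := by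
      have e : a * ((1 - a) - c) * a = a * (1 - a) * a - a * c * a := by noncomm_ring
      rw [e, e2, zero_sub]
    have pc2 : (a * c * a).PosSemidef := by
      have := hc.mul_mul_conjTranspose_same a
      rwa [ha.isHermitian.eq] at this
    have z2 : a * c * a = 0 := psd_neg_eq_zero pc2 (eq2 ▸ p2)
    have hc2 : a * c = 0 := psd_conj_zero hc ha.isHermitian z2
    have e : c = a * c + (1 - a) * c := by noncomm_ring
    rw [e, hc1, hc2, add_zero]
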